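/- Let F ⊆ E be differential fields of characteristic zero with the same field of constants, i.e., E^δ = F^δ. Let f₁,…,fₛ ∈ F and let y₁,…,yₛ ∈ E^× satisfy δ(yᵢ) = fᵢ yᵢ for i = 1,…,s. If d₁,…,dₛ ∈ ℤ and a ∈ F^× satisfy d₁f₁ + ⋯ + dₛfₛ = δ(a)/a, then y₁^{d₁} ⋯ yₛ^{dₛ} ∈ F. In particular, if f₁,…,fₛ are logarithmically dependent over F (such a relation holds with not all dᵢ zero), then y₁,…,yₛ are algebraically dependent over F. -/

import Mathlib

def IsDerivationFun {R : Type*} [CommRing R] (δ : R → R) : Prop :=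
  (∀ a b : R, δ (a + b) = δ a + δ b) ∧ (∀ a b : R, δ (a * b) = a * δ b + δ a * b)

section helpers
variable {E : Type*} [Field E] {δ : E → E}

lemma DF.one (hδ : IsDerivationFun δ) : δ 1 = 0 := by
  have h := hδ.2 1 1
  simp only [mul_one, one_mul] at h
  exact (right_eq_add.mp h)

lemma DF.pow (hδ : IsDerivationFun δ) {g z : E} (h : δ z = g * z) :
    ∀ n : ℕ, δ (z ^ n) = n * g * z ^ n
  | 0 => by simp [DF.one hδ]
  | (n+1) => by
      rw [pow_succ, hδ.2, h, DF.pow hδ h n]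
      push_cast
      ring

lemma DF.inv (hδ : IsDerivationFun δ) {g z : E} (hz : z ≠ 0) (h : δ z = g * z) :
    δ z⁻¹ = -g * z⁻¹ := by
  have h2 := hδ.2 z z⁻¹
  rw [mul_inv_cancel₀ hz, DF.one hδ, h] at h2
  field_simp at h2 ⊢
  linear_combination -h2

lemma DF.zpow (hδ : IsDerivationFun δ) {g z : E} (hz : z ≠ 0) (h : δ z = g * z) (d : ℤ) :
    δ (z ^ d) = d * g * z ^ d := by
  cases d with
  | ofNat n => simpa [zpow_natCast] using DF.pow hδ h n
  | negSucc n =>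
      have hinv := DF.inv hδ hz h
      have hp := DF.pow hδ hinv (n + 1)
      rw [zpow_negSucc, ← inv_pow, hp]
      push_cast
      ring

lemma DF.prod (hδ : IsDerivationFun δ) {s : ℕ} {z g : Fin s → E}
    (h : ∀ i, δ (z i) = g i * z i) :
    δ (∏ i, z i) = (∑ i, g i) * ∏ i, z i := by
  classical
  have H : ∀ t : Finset (Fin s),
      δ (∏ i ∈ t, z i) = (∑ i ∈ t, g i) * ∏ i ∈ t, z i := by
    intro t
    induction t using Finset.induction_on with
    | empty => simp [DF.one hδ]
    | insert _ _ hni ih =>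
        rw [Finset.prod_insert hni, Finset.sum_insert hni, hδ.2, h, ih]
        ring
  exact H Finset.univ

end helpers
theorem zpow_prod_mem_of_logarithmic_relation
    (F E : Type*) [Field F] [Field E] [CharZero F] [CharZero E] [Algebra F E]
    (δ : E → E) (hδ : IsDerivationFun δ)
    -- the image of `F` is stable under `δ`, so that `(F, δ|F)` is a differential subfield
    (hFstable : ∀ a : F, ∃ b : F, δ (algebraMap F E a) = algebraMap F E b)
    -- `E` and `F` have the same constants: every constant of `E` comes from `F`
    (hconst : ∀ e : E, δ e = 0 → e ∈ Set.range (algebraMap F E))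
    {s : ℕ} (f : Fin s → F) (y : Fin s → E) (hy : ∀ i, y i ≠ 0)
    (hexp : ∀ i, δ (y i) = algebraMap F E (f i) * y i) :
    (∀ (d : Fin s → ℤ) (a : F), a ≠ 0 →
        (∑ i, (d i : E) * algebraMap F E (f i)) =
          δ (algebraMap F E a) / algebraMap F E a →
        (∏ i, y i ^ d i) ∈ Set.range (algebraMap F E)) ∧
    ((∃ (d : Fin s → ℤ) (a : F), a ≠ 0 ∧ (¬ ∀ i, d i = 0) ∧
        (∑ i, (d i : E) * algebraMap F E (f i)) =
          δ (algebraMap F E a) / algebraMap F E a) →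
      ¬ AlgebraicIndependent F y) := by
  classical
  have part1 : ∀ (d : Fin s → ℤ) (a : F), a ≠ 0 →
      (∑ i, (d i : E) * algebraMap F E (f i)) =
        δ (algebraMap F E a) / algebraMap F E a →
      (∏ i, y i ^ d i) ∈ Set.range (algebraMap F E) := by
    intro d a ha hrel
    set A : E := algebraMap F E a with hA_def
    have hA : A ≠ 0 := by
      simpa [hA_def] using (map_ne_zero_iff _ (algebraMap F E).injective).mpr ha
    set u : E := ∏ i, y i ^ d i with hu_def
    have hu : u ≠ 0 := Finset.prod_ne_zero_iff.mpr fun i _ => zpow_ne_zero _ (hy i)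
    -- derivative of u
    have hδu : δ u = (∑ i, (d i : E) * algebraMap F E (f i)) * u :=
      DF.prod hδ (fun i => DF.zpow hδ (hy i) (hexp i) (d i))
    -- derivative of A⁻¹
    have hAeq : δ A = (δ A / A) * A := by field_simp
    have hAinv : δ A⁻¹ = -(δ A / A) * A⁻¹ := DF.inv hδ hA hAeq
    have h0 : δ (u * A⁻¹) = 0 := by
      rw [hδ.2, hAinv, hδu, hrel]
      field_simp
      ring
    obtain ⟨c, hc⟩ := hconst _ h0
    refine ⟨c * a, ?_⟩
    rw [map_mul, hc, ← hA_def]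
    field_simp
  refine ⟨part1, ?_⟩
  rintro ⟨d, a, ha, hd, hrel⟩ hind
  obtain ⟨c, hc⟩ := part1 d a ha hrel
  -- exponent vectors
  let mp : Fin s →₀ ℕ := Finsupp.equivFunOnFinite.symm fun i => (d i).toNat
  let mm : Fin s →₀ ℕ := Finsupp.equivFunOnFinite.symm fun i => (-d i).toNat
  have hmp : ∀ i, mp i = (d i).toNat := fun i => rfl
  have hmm : ∀ i, mm i = (-d i).toNat := fun i => rfl
  set P : MvPolynomial (Fin s) F :=
    MvPolynomial.monomial mp 1 - MvPolynomial.monomial mm c with hP_def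
  have hmpmm : mp ≠ mm := by
    push_neg at hd
    obtain ⟨i, hi⟩ := hd
    intro h
    have : mp i = mm i := by rw [h]
    rw [hmp, hmm] at this
    omega
  have hPne : P ≠ 0 := by
    intro h
    have := congrArg (MvPolynomial.coeff mp) h
    rw [hP_def] at this
    simp [MvPolynomial.coeff_monomial, hmpmm.symm] at this
  have heval : MvPolynomial.aeval y P = 0 := by
    have hmono : ∀ (m : Fin s →₀ ℕ) (r : F),
        MvPolynomial.aeval y (MvPolynomial.monomial m r)
          = algebraMap F E r * ∏ i, y i ^ (m i) := by
      intro m r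
      rw [MvPolynomial.aeval_monomial]
      congr 1
      exact Finsupp.prod_fintype _ _ (fun i => pow_zero _)
    have key : (∏ i, y i ^ (mp i)) = algebraMap F E c * ∏ i, y i ^ (mm i) := by
      have : ∀ i, y i ^ (mp i) = y i ^ (d i) * y i ^ (mm i) := by
        intro i
        rw [← zpow_natCast (y i) (mp i), ← zpow_natCast (y i) (mm i),
          ← zpow_add₀ (hy i)]
        congr 1
        rw [hmp, hmm]
        omega
      rw [Finset.prod_congr rfl (fun i _ => this i), Finset.prod_mul_distrib, hc]
    rw [hP_def, map_sub, hmono, hmono, key, map_one, one_mul]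
    ring
  exact hPne (hind (by simpa using heval))
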